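/- arXiv:2509.20304 — 2 statements merged into one kernel-verified Lean document; each statement's English description precedes it below -/
import Mathlib

section
/- Under the stationarity conditions $\nabla L = 0$ with $t_0 = 0$, the variables $T_i = \delta^{t_i}$ satisfy $T_i = T_1^i/(1+T_1)^{i-1}$ for all $1 \le i \le n-1$. -/
open Finset

/-- Under the stationarity conditions `H_{i-1} T_i² = ∑_{j=i+1}^n T_j` (with `T₀ = 1`),
the variables satisfy `T_i = T₁^i/(1+T₁)^(i-1)` for `1 ≤ i ≤ n-1`. -/
theorem stmt_4 (n : ℕ) (hn : 2 ≤ n) (Tv : ℕ → ℝ) (hpos : ∀ i ≤ n, 0 < Tv i)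
    (hT0 : Tv 0 = 1)
    (hstat : ∀ i, 1 ≤ i → i ≤ n - 1 →
      (∑ j ∈ Finset.range i, 1 / Tv j) * Tv i ^ 2 = ∑ j ∈ Finset.Icc (i + 1) n, Tv j) :
    ∀ i, 1 ≤ i → i ≤ n - 1 → Tv i = Tv 1 ^ i / (1 + Tv 1) ^ (i - 1) := by
  have ht : 0 < Tv 1 := hpos 1 (by omega)
  set t := Tv 1 with ht_def
  have ht1 : (0:ℝ) < 1 + t := by linarith
  have htne : t ≠ 0 := ne_of_gt ht
  have ht1ne : (1 + t) ≠ 0 := ne_of_gt ht1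
  have key : ∀ k, k + 1 ≤ n - 1 →
      Tv (k+1) = t^(k+1)/(1+t)^k ∧
      (∑ j ∈ Finset.range (k+2), 1 / Tv j) = ((1+t)/t)^(k+1) := by
    intro k
    induction k with
    | zero =>
      intro _
      constructor
      · simp [ht_def]
      · rw [Finset.sum_range_succ, Finset.sum_range_succ, Finset.range_zero,
          Finset.sum_empty, hT0, ← ht_def]
        field_simp
        simp only [zero_add, pow_one, one_mul]
        rw [mul_comm, div_mul_cancel₀ _ htne]
        ring
    | succ k ih =>
      intro hk2
      obtain ⟨hTk, hHk⟩ := ih (by omega)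
      have h1 := hstat (k+1) (by omega) (by omega)
      have h2 := hstat (k+2) (by omega) (by omega)
      have hsplit : (∑ j ∈ Finset.Icc (k+1+1) n, Tv j)
          = Tv (k+2) + ∑ j ∈ Finset.Icc (k+2+1) n, Tv j := by
        rw [Finset.Icc_eq_cons_Ioc (by omega : k+1+1 ≤ n), Finset.sum_cons,
          ← Finset.Icc_add_one_left_eq_Ioc]
      have hrange : (∑ j ∈ Finset.range (k+1), 1 / Tv j)
          = ((1+t)/t)^(k+1) - 1 / Tv (k+1) := by
        have := Finset.sum_range_succ (fun j => 1 / Tv j) (k+1)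
        rw [this] at hHk
        linarith
      set x := Tv (k+2) with hx_def
      have hx : 0 < x := hpos (k+2) (by omega)
      set y := t^(k+2)/(1+t)^(k+1) with hy_def
      have hy : 0 < y := by positivity
      -- the key quadratic equation
      have heq : ((1+t)/t)^(k+1) * x^2 + x = ((1+t)/t)^(k+1) * y^2 + y := by
        have hmain : ((1+t)/t)^(k+1) * x^2 + x
            = (((1+t)/t)^(k+1) - 1 / Tv (k+1)) * Tv (k+1)^2 := by
          rw [← hrange, h1, hsplit, ← h2, hHk]
          ring
        rw [hmain, hTk, hy_def]
        have h1 : ((1+t)/t)^(k+1) = (1+t)^(k+1)/t^(k+1) := div_pow _ _ _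
        rw [h1]
        field_simp
        ring
      have hfac : (x - y) * (((1+t)/t)^(k+1) * (x + y) + 1) = 0 := by
        linear_combination heq
      have hposfac : (0:ℝ) < ((1+t)/t)^(k+1) * (x + y) + 1 := by positivity
      have hxy : x = y := by
        rcases mul_eq_zero.mp hfac with h | h
        · linarith
        · linarith
      refine ⟨hxy, ?_⟩
      rw [Finset.sum_range_succ, hHk, show Tv (k+2) = y from hxy, hy_def]
      rw [div_pow, div_pow]
      field_simp
      ring
  intro i hi1 hin
  obtain ⟨h, -⟩ := key (i-1) (by omega)
  have hi : i - 1 + 1 = i := by omega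
  rw [hi] at h
  exact h
end

section
/- Suppose $t_0 = \dots = t_{a-1} = 0$ and the stationarity conditions hold. Then with $T_a = \delta^{t_a}$, for all $i \ge 0$ with $a + i \le n - a$, $T_{a+i} = \frac{1}{a} \cdot \frac{(a T_a)^{i+1}}{(a T_a + 1)^i}$. -/
open Finset

/-- With `t₀ = ⋯ = t_{a-1} = 0` (so `T_j = 1` for `j < a`) and the stationarity
recursion, `T_{a+i} = (1/a)·(a T_a)^(i+1)/(a T_a + 1)^i` for `a + i ≤ n - a`. -/
theorem stmt_15 (n a : ℕ) (ha : 1 ≤ a) (han : 2 * a ≤ n)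
    (Tv : ℕ → ℝ) (hpos : ∀ i ≤ n, 0 < Tv i)
    (hzero : ∀ j < a, Tv j = 1)
    (hrec : ∀ i, a < i → i ≤ n - a →
      Tv i = (-1 + Real.sqrt (1 + 4 * (∑ j ∈ Finset.range (i - 1), 1 / Tv j) *
        (∑ j ∈ Finset.range i, 1 / Tv j) * Tv (i - 1) ^ 2)) /
        (2 * ∑ j ∈ Finset.range i, 1 / Tv j)) :
    ∀ i, a + i ≤ n - a →
      Tv (a + i) = (1 / (a : ℝ)) * (((a : ℝ) * Tv a) ^ (i + 1) /
        ((a : ℝ) * Tv a + 1) ^ i) := by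
  have haR : (0 : ℝ) < a := by exact_mod_cast ha
  have haR' : (a : ℝ) ≠ 0 := ne_of_gt haR
  have hSpos : 0 < Tv a := hpos a (by omega)
  set S := Tv a with hS
  set x : ℝ := (a : ℝ) * S with hxdef
  have hx : 0 < x := by positivity
  have hx' : x ≠ 0 := ne_of_gt hx
  have hx1 : (0 : ℝ) < x + 1 := by linarith
  have hx1' : x + 1 ≠ 0 := ne_of_gt hx1
  have key : ∀ i, a + i ≤ n - a →
      Tv (a + i) = (1 / (a : ℝ)) * (x ^ (i + 1) / (x + 1) ^ i) ∧
      (∑ j ∈ Finset.range (a + i), 1 / Tv j) = (a : ℝ) * ((x + 1) / x) ^ i := by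
    intro i
    induction i with
    | zero =>
      intro _
      constructor
      · simp only [Nat.add_zero, pow_one, pow_zero, div_one]
        field_simp [hxdef]
        simp only [hS, hxdef]; ring
      · have : ∀ j ∈ Finset.range a, 1 / Tv j = (1 : ℝ) := by
          intro j hj
          rw [hzero j (Finset.mem_range.mp hj)]; norm_num
        rw [Nat.add_zero, Finset.sum_congr rfl this]
        simp
    | succ i ih =>
      intro hle
      obtain ⟨hT, hQ⟩ := ih (by omega)
      have hQ1 : (∑ j ∈ Finset.range (a + i + 1), 1 / Tv j)
          = (a : ℝ) * ((x + 1) / x) ^ (i + 1) := by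
        rw [Finset.sum_range_succ, hQ, hT]
        simp only [div_pow]
        field_simp
        ring
      have hrec' := hrec (a + i + 1) (by omega) (by omega)
      simp only [Nat.add_sub_cancel] at hrec'
      rw [hQ, hQ1, hT] at hrec'
      have hsq : 1 + 4 * ((a : ℝ) * ((x + 1) / x) ^ i) *
          ((a : ℝ) * ((x + 1) / x) ^ (i + 1)) *
          ((1 / (a : ℝ)) * (x ^ (i + 1) / (x + 1) ^ i)) ^ 2 = (2 * x + 1) ^ 2 := by
        simp only [div_pow]
        field_simp
        ring
      rw [hsq, Real.sqrt_sq (by positivity)] at hrec'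
      have hTnew : Tv (a + (i + 1)) = (1 / (a : ℝ)) * (x ^ (i + 2) / (x + 1) ^ (i + 1)) := by
        have h1 : a + (i + 1) = a + i + 1 := by omega
        rw [h1, hrec']
        rw [div_eq_iff (by positivity)]
        simp only [div_pow]
        field_simp
        ring
      refine ⟨by simpa using hTnew, ?_⟩
      have h1 : a + (i + 1) = a + i + 1 := by omega
      rw [h1, hQ1]
  intro i hi
  exact (key i hi).1
end
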